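/- Doctrinal adjunction, part 1: let (u, φ) : (A, s) → (B, t) be a monad morphism in a 2-category (u : A → B a 1-cell, φ : t u ⟹ u s a 2-cell compatible with units and multiplications), and suppose u has a left adjoint f with unit β : 1_B ⟹ u f and counit α : f u ⟹ 1_A. Then the mate φ̂ := (α s f) ∘ (f φ f) ∘ (f t β) : f t ⟹ s f makes (f, φ̂) a monad opmorphism (B, t) → (A, s), i.e., φ̂ is compatible with the units and multiplications of t and s. -/
import Mathlib


open CategoryTheory CategoryTheory.Bicategory

namespace WoodStmt13

variable {B : Type*} [Bicategory B]

/-- Monad axioms for `(s, η, μ)` on an object of a bicategory. -/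
def IsMonad {a : B} (s : a ⟶ a) (η : 𝟙 a ⟶ s) (μ : s ≫ s ⟶ s) : Prop :=
  (η ▷ s) ≫ μ = (λ_ s).hom ∧
  (s ◁ η) ≫ μ = (ρ_ s).hom ∧
  (μ ▷ s) ≫ μ = (α_ s s s).hom ≫ (s ◁ μ) ≫ μ

/-- The monad morphism axioms for `(u, φ) : (a, s) → (b, t)`, where
`φ : u ≫ t ⟶ s ≫ u` (i.e. `φ : t u ⟹ u s`). -/
def IsMonadMorphism {a b : B} (s : a ⟶ a) (ηs : 𝟙 a ⟶ s) (μs : s ≫ s ⟶ s)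
    (t : b ⟶ b) (ηt : 𝟙 b ⟶ t) (μt : t ≫ t ⟶ t)
    (u : a ⟶ b) (φ : u ≫ t ⟶ s ≫ u) : Prop :=
  (u ◁ ηt) ≫ φ = (ρ_ u).hom ≫ (λ_ u).inv ≫ (ηs ▷ u) ∧
  (u ◁ μt) ≫ φ =
    (α_ u t t).inv ≫ (φ ▷ t) ≫ (α_ s u t).hom ≫ (s ◁ φ) ≫ (α_ s s u).inv ≫ (μs ▷ u)

/-- The monad opmorphism axioms for `(f, ψ) : (b, t) → (a, s)`, where
`ψ : t ≫ f ⟶ f ≫ s` (i.e. `ψ : f t ⟹ s f`). -/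
def IsMonadOpmorphism {a b : B} (s : a ⟶ a) (ηs : 𝟙 a ⟶ s) (μs : s ≫ s ⟶ s)
    (t : b ⟶ b) (ηt : 𝟙 b ⟶ t) (μt : t ≫ t ⟶ t)
    (f : b ⟶ a) (ψ : t ≫ f ⟶ f ≫ s) : Prop :=
  (ηt ▷ f) ≫ ψ = (λ_ f).hom ≫ (ρ_ f).inv ≫ (f ◁ ηs) ∧
  (μt ▷ f) ≫ ψ =
    (α_ t t f).hom ≫ (t ◁ ψ) ≫ (α_ t f s).inv ≫ (ψ ▷ s) ≫ (α_ f s s).hom ≫ (f ◁ μs)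

/-- The mate `φ̂ = (α s f) ∘ (f φ f) ∘ (f t β) : f t ⟹ s f` of `φ : t u ⟹ u s` under an
adjunction `f ⊣ u`. -/
def mate {a b : B} (s : a ⟶ a) (t : b ⟶ b) (u : a ⟶ b) (f : b ⟶ a)
    (adj : Bicategory.Adjunction f u) (φ : u ≫ t ⟶ s ≫ u) : t ≫ f ⟶ f ≫ s :=
  (λ_ (t ≫ f)).inv ≫ (adj.unit ▷ (t ≫ f)) ≫ (α_ f u (t ≫ f)).hom ≫
    (f ◁ (α_ u t f).inv) ≫ (f ◁ (φ ▷ f)) ≫ (f ◁ (α_ s u f).hom) ≫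
    (f ◁ (s ◁ adj.counit)) ≫ (f ◁ (ρ_ s).hom)

/-- (Doctrinal adjunction, part 1.) If `(u, φ) : (a, s) → (b, t)` is a
monad morphism in a bicategory and `f ⊣ u`, then the mate `φ̂ : f t ⟹ s f` of `φ` makes
`(f, φ̂)` a monad opmorphism `(b, t) → (a, s)`. -/
theorem doctrinal_adjunction_part1 {a b : B}
    (s : a ⟶ a) (ηs : 𝟙 a ⟶ s) (μs : s ≫ s ⟶ s)
    (t : b ⟶ b) (ηt : 𝟙 b ⟶ t) (μt : t ≫ t ⟶ t)
    (hs : IsMonad s ηs μs) (ht : IsMonad t ηt μt)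
    (u : a ⟶ b) (φ : u ≫ t ⟶ s ≫ u)
    (hφ : IsMonadMorphism s ηs μs t ηt μt u φ)
    (f : b ⟶ a) (adj : Bicategory.Adjunction f u) :
    IsMonadOpmorphism s ηs μs t ηt μt f (mate s t u f adj φ) := by
  obtain ⟨hφ1, hφ2⟩ := hφ
  have triL : adj.unit ▷ f ⊗≫ f ◁ adj.counit = (λ_ f).hom ≫ (ρ_ f).inv := adj.left_triangle
  have triR : u ◁ adj.unit ⊗≫ adj.counit ▷ u = (ρ_ u).hom ≫ (λ_ u).inv := adj.right_triangle
  constructor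
  · calc (ηt ▷ f) ≫ mate s t u f adj φ
        = 𝟙 _ ⊗≫ ((𝟙 b ◁ (ηt ▷ f)) ≫ (adj.unit ▷ (t ≫ f))) ⊗≫ f ◁ φ ▷ f ⊗≫
            f ◁ s ◁ adj.counit ⊗≫ 𝟙 _ := by
          dsimp only [mate]; bicategory
      _ = 𝟙 _ ⊗≫ adj.unit ▷ f ⊗≫ f ◁ ((u ◁ ηt) ≫ φ) ▷ f ⊗≫ f ◁ s ◁ adj.counit ⊗≫ 𝟙 _ := by
          rw [whisker_exchange adj.unit (ηt ▷ f)]; bicategory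
      _ = 𝟙 _ ⊗≫ adj.unit ▷ f ⊗≫ f ◁ ((ηs ▷ (u ≫ f)) ≫ (s ◁ adj.counit)) ⊗≫ 𝟙 _ := by
          rw [hφ1]; bicategory
      _ = 𝟙 _ ⊗≫ (adj.unit ▷ f ⊗≫ f ◁ adj.counit) ⊗≫ f ◁ ηs ⊗≫ 𝟙 _ := by
          rw [← whisker_exchange ηs adj.counit]; bicategory
      _ = (λ_ f).hom ≫ (ρ_ f).inv ≫ (f ◁ ηs) := by
          rw [triL]; bicategory
  · calc (μt ▷ f) ≫ mate s t u f adj φ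
        = 𝟙 _ ⊗≫ ((𝟙 b ◁ (μt ▷ f)) ≫ (adj.unit ▷ (t ≫ f))) ⊗≫ f ◁ φ ▷ f ⊗≫
            f ◁ s ◁ adj.counit ⊗≫ 𝟙 _ := by
          dsimp only [mate]; bicategory
      _ = 𝟙 _ ⊗≫ adj.unit ▷ ((t ≫ t) ≫ f) ⊗≫ f ◁ ((u ◁ μt) ≫ φ) ▷ f ⊗≫
            f ◁ s ◁ adj.counit ⊗≫ 𝟙 _ := by
          rw [whisker_exchange adj.unit (μt ▷ f)]; bicategory
      _ = 𝟙 _ ⊗≫ adj.unit ▷ ((t ≫ t) ≫ f) ⊗≫ f ◁ φ ▷ (t ≫ f) ⊗≫ f ◁ s ◁ φ ▷ f ⊗≫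
            f ◁ ((μs ▷ (u ≫ f)) ≫ (s ◁ adj.counit)) ⊗≫ 𝟙 _ := by
          rw [hφ2]; bicategory
      _ = 𝟙 _ ⊗≫ adj.unit ▷ ((t ≫ t) ≫ f) ⊗≫ f ◁ φ ▷ (t ≫ f) ⊗≫ f ◁ s ◁ φ ▷ f ⊗≫
            f ◁ (s ≫ s) ◁ adj.counit ⊗≫ f ◁ μs ⊗≫ 𝟙 _ := by
          rw [← whisker_exchange μs adj.counit]; bicategory
      _ = 𝟙 _ ⊗≫ adj.unit ▷ ((t ≫ t) ≫ f) ⊗≫ f ◁ φ ▷ (t ≫ f) ⊗≫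
            f ◁ s ◁ ((u ◁ adj.unit ⊗≫ adj.counit ▷ u) ▷ (t ≫ f)) ⊗≫
            f ◁ s ◁ φ ▷ f ⊗≫ f ◁ (s ≫ s) ◁ adj.counit ⊗≫ f ◁ μs ⊗≫ 𝟙 _ := by
          rw [triR]; bicategory
      _ = 𝟙 _ ⊗≫ adj.unit ▷ ((t ≫ t) ≫ f) ⊗≫ f ◁ φ ▷ (t ≫ f) ⊗≫
            f ◁ s ◁ u ◁ adj.unit ▷ (t ≫ f) ⊗≫
            f ◁ s ◁ (((u ≫ f) ◁ (φ ▷ f)) ≫ (adj.counit ▷ ((s ≫ u) ≫ f))) ⊗≫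
            f ◁ (s ≫ s) ◁ adj.counit ⊗≫ f ◁ μs ⊗≫ 𝟙 _ := by
          rw [whisker_exchange adj.counit (φ ▷ f)]; bicategory
      _ = 𝟙 _ ⊗≫ adj.unit ▷ ((t ≫ t) ≫ f) ⊗≫ f ◁ φ ▷ (t ≫ f) ⊗≫
            f ◁ s ◁ u ◁ adj.unit ▷ (t ≫ f) ⊗≫
            f ◁ s ◁ ((u ≫ f) ◁ (φ ▷ f)) ⊗≫
            f ◁ s ◁ (((u ≫ f) ◁ (s ◁ adj.counit)) ≫ (adj.counit ▷ (s ≫ 𝟙 a))) ⊗≫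
            f ◁ μs ⊗≫ 𝟙 _ := by
          rw [whisker_exchange adj.counit (s ◁ adj.counit)]; bicategory
      _ = 𝟙 _ ⊗≫ adj.unit ▷ ((t ≫ t) ≫ f) ⊗≫
            f ◁ (((u ≫ t) ◁ (adj.unit ▷ (t ≫ f))) ≫ (φ ▷ ((f ≫ u) ≫ (t ≫ f)))) ⊗≫
            f ◁ s ◁ ((u ≫ f) ◁ (φ ▷ f)) ⊗≫
            f ◁ s ◁ ((u ≫ f) ◁ (s ◁ adj.counit)) ⊗≫
            f ◁ s ◁ (adj.counit ▷ s) ⊗≫ f ◁ μs ⊗≫ 𝟙 _ := by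
          rw [whisker_exchange φ (adj.unit ▷ (t ≫ f))]; bicategory
      _ = 𝟙 _ ⊗≫ adj.unit ▷ ((t ≫ t) ≫ f) ⊗≫
            f ◁ ((u ≫ t) ◁ (adj.unit ▷ (t ≫ f))) ⊗≫
            f ◁ (((u ≫ t) ◁ (f ◁ (φ ▷ f))) ≫ (φ ▷ (f ≫ ((s ≫ u) ≫ f)))) ⊗≫
            f ◁ s ◁ ((u ≫ f) ◁ (s ◁ adj.counit)) ⊗≫
            f ◁ s ◁ (adj.counit ▷ s) ⊗≫ f ◁ μs ⊗≫ 𝟙 _ := by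
          rw [whisker_exchange φ (f ◁ (φ ▷ f))]; bicategory
      _ = 𝟙 _ ⊗≫ adj.unit ▷ ((t ≫ t) ≫ f) ⊗≫
            f ◁ ((u ≫ t) ◁ (adj.unit ▷ (t ≫ f))) ⊗≫
            f ◁ ((u ≫ t) ◁ (f ◁ (φ ▷ f))) ⊗≫
            f ◁ (((u ≫ t) ◁ (f ◁ (s ◁ adj.counit))) ≫ (φ ▷ (f ≫ (s ≫ 𝟙 a)))) ⊗≫
            f ◁ s ◁ (adj.counit ▷ s) ⊗≫ f ◁ μs ⊗≫ 𝟙 _ := by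
          rw [whisker_exchange φ (f ◁ (s ◁ adj.counit))]; bicategory
      _ = 𝟙 _ ⊗≫
            ((𝟙 b ◁ (t ◁ (adj.unit ▷ (t ≫ f)))) ≫ (adj.unit ▷ (t ≫ ((f ≫ u) ≫ (t ≫ f))))) ⊗≫
            f ◁ ((u ≫ t) ◁ (f ◁ (φ ▷ f))) ⊗≫
            f ◁ ((u ≫ t) ◁ (f ◁ (s ◁ adj.counit))) ⊗≫
            f ◁ (φ ▷ (f ≫ s)) ⊗≫
            f ◁ s ◁ (adj.counit ▷ s) ⊗≫ f ◁ μs ⊗≫ 𝟙 _ := by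
          rw [whisker_exchange adj.unit (t ◁ (adj.unit ▷ (t ≫ f)))]; bicategory
      _ = 𝟙 _ ⊗≫ t ◁ (adj.unit ▷ (t ≫ f)) ⊗≫
            ((𝟙 b ◁ (t ◁ (f ◁ (φ ▷ f)))) ≫ (adj.unit ▷ (t ≫ (f ≫ ((s ≫ u) ≫ f))))) ⊗≫
            f ◁ ((u ≫ t) ◁ (f ◁ (s ◁ adj.counit))) ⊗≫
            f ◁ (φ ▷ (f ≫ s)) ⊗≫
            f ◁ s ◁ (adj.counit ▷ s) ⊗≫ f ◁ μs ⊗≫ 𝟙 _ := by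
          rw [whisker_exchange adj.unit (t ◁ (f ◁ (φ ▷ f)))]; bicategory
      _ = 𝟙 _ ⊗≫ t ◁ (adj.unit ▷ (t ≫ f)) ⊗≫
            t ◁ (f ◁ (φ ▷ f)) ⊗≫
            ((𝟙 b ◁ (t ◁ (f ◁ (s ◁ adj.counit)))) ≫ (adj.unit ▷ (t ≫ (f ≫ (s ≫ 𝟙 a))))) ⊗≫
            f ◁ (φ ▷ (f ≫ s)) ⊗≫
            f ◁ s ◁ (adj.counit ▷ s) ⊗≫ f ◁ μs ⊗≫ 𝟙 _ := by
          rw [whisker_exchange adj.unit (t ◁ (f ◁ (s ◁ adj.counit)))]; bicategory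
      _ = (α_ t t f).hom ≫ (t ◁ mate s t u f adj φ) ≫ (α_ t f s).inv ≫
            (mate s t u f adj φ ▷ s) ≫ (α_ f s s).hom ≫ (f ◁ μs) := by
          dsimp only [mate]; bicategory

end WoodStmt13
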